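/- Let B* = ∩_{i=1}^n B(v_i, ρ) be a nonempty intersection of closed balls of radius ρ > 0 in ℝ^d, and suppose B* contains at least two points. Then for every v ∈ ℝ^d there exist nonnegative μ_1,…,μ_n and a positive μ̄ with μ̄ + Σ_i μ_i = 1 such that proj_{B*}(v) = μ̄ v + Σ_i μ_i v_i. -/

import Mathlib

open Finset

open scoped RealInnerProductSpace

lemma aux_cone_closed {H : Type*} [NormedAddCommGroup H] [NormedSpace ℝ H]
    {C : Set H} (hC : IsCompact C) (h0 : (0:H) ∉ C) :
    IsClosed {x : H | ∃ r : ℝ, 0 ≤ r ∧ ∃ c ∈ C, x = r • c} := by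
  set K := {x : H | ∃ r : ℝ, 0 ≤ r ∧ ∃ c ∈ C, x = r • c} with hK
  rcases C.eq_empty_or_nonempty with hCe | hCne
  · have : K = ∅ := by
      ext x; simp [hK, hCe]
    rw [this]; exact isClosed_empty
  obtain ⟨c₀, hc₀C, hc₀⟩ := hC.exists_isMinOn hCne continuous_norm.continuousOn
  have hδ : 0 < ‖c₀‖ := by
    rcases norm_pos_iff.mpr (fun h => h0 (h ▸ hc₀C)) with h; exact h
  refine isClosed_of_closure_subset ?_
  intro y hy
  set R := (‖y‖ + 1) / ‖c₀‖ with hR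
  have hKc : IsCompact ((fun p : ℝ × H => p.1 • p.2) '' (Set.Icc 0 R ×ˢ C)) :=
    ((isCompact_Icc).prod hC).image (continuous_fst.smul continuous_snd)
  have hyKc : y ∈ (fun p : ℝ × H => p.1 • p.2) '' (Set.Icc 0 R ×ˢ C) := by
    refine hKc.isClosed.closure_subset ?_
    rw [Metric.mem_closure_iff]
    intro ε hε
    rw [Metric.mem_closure_iff] at hy
    obtain ⟨b, hbK, hdb⟩ := hy (min ε 1) (lt_min hε one_pos)
    obtain ⟨r, hr0, c, hcC, rfl⟩ := hbK
    refine ⟨r • c, ⟨(r, c), ⟨⟨hr0, ?_⟩, hcC⟩, rfl⟩, lt_of_lt_of_le hdb (min_le_left _ _)⟩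
    have hb : ‖r • c‖ ≤ ‖y‖ + 1 := by
      have h2 : dist y (r • c) < 1 := lt_of_lt_of_le hdb (min_le_right _ _)
      have h3 := norm_le_norm_add_norm_sub' (r • c) y
      rw [dist_eq_norm] at h2
      rw [norm_sub_rev] at h3
      linarith
    have hcn : ‖c₀‖ ≤ ‖c‖ := hc₀ hcC
    have : r * ‖c₀‖ ≤ ‖y‖ + 1 := by
      calc r * ‖c₀‖ ≤ r * ‖c‖ := by nlinarith
        _ = ‖r • c‖ := by rw [norm_smul, Real.norm_of_nonneg hr0]
        _ ≤ ‖y‖ + 1 := hb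
    have hrR : r ≤ R := by rw [hR, le_div_iff₀ hδ]; linarith
    exact hrR
  obtain ⟨⟨r, c⟩, ⟨⟨hr0, _⟩, hcC⟩, hrc⟩ := hyKc
  exact ⟨r, hr0, c, hcC, hrc.symm⟩

set_option maxHeartbeats 1000000 in
/-- The projection onto a nonempty, non-singleton intersection of equal-radius
closed balls is a convex combination of the projected point and the centers,
with strictly positive weight on the projected point. -/
theorem projection_onto_ball_intersection_convex_combination
    {d n : ℕ} (v' : Fin n → EuclideanSpace ℝ (Fin d)) (ρ : ℝ) (hρ : 0 < ρ)
    (Bstar : Set (EuclideanSpace ℝ (Fin d)))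
    (hB : Bstar = ⋂ i, Metric.closedBall (v' i) ρ)
    (hne : Bstar.Nonempty)
    (hnonsingleton : ∃ a ∈ Bstar, ∃ b ∈ Bstar, a ≠ b)
    (v z : EuclideanSpace ℝ (Fin d))
    (hz : z ∈ Bstar) (hproj : ∀ y ∈ Bstar, ‖v - z‖ ≤ ‖v - y‖) :
    ∃ μbar : ℝ, ∃ μ : Fin n → ℝ,
      0 < μbar ∧ (∀ i, 0 ≤ μ i) ∧ μbar + ∑ i, μ i = 1 ∧
      z = μbar • v + ∑ i, μ i • v' i := by
  classical
  have hmem : ∀ x : EuclideanSpace ℝ (Fin d), x ∈ Bstar ↔ ∀ i, ‖x - v' i‖ ≤ ρ := by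
    intro x; simp [hB, Metric.mem_closedBall, dist_eq_norm]
  obtain ⟨a, ha, b, hb, hab⟩ := hnonsingleton
  set m : EuclideanSpace ℝ (Fin d) := midpoint ℝ a b with hmdef
  -- the midpoint is a Slater point
  have hm : ∀ i, ‖m - v' i‖ < ρ := by
    intro i
    have hpa : ‖a - v' i‖ ≤ ρ := (hmem a).mp ha i
    have hpb : ‖b - v' i‖ ≤ ρ := (hmem b).mp hb i
    have hmv : m - v' i = (2:ℝ)⁻¹ • ((a - v' i) + (b - v' i)) := by
      rw [hmdef, midpoint_eq_smul_add]
      have h2 : (⅟2 : ℝ) = (2:ℝ)⁻¹ := by norm_num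
      rw [h2]
      module
    have h1 := norm_add_sq_real (a - v' i) (b - v' i)
    have h2 := norm_sub_sq_real (a - v' i) (b - v' i)
    have hasb : (a - v' i) - (b - v' i) = a - b := by abel
    rw [hasb] at h2
    have habn : 0 < ‖a - b‖ := by
      rw [norm_pos_iff, sub_ne_zero]; exact hab
    have hnm : ‖m - v' i‖ = (2:ℝ)⁻¹ * ‖(a - v' i) + (b - v' i)‖ := by
      rw [hmv, norm_smul]; norm_num
    have hge := norm_nonneg ((a - v' i) + (b - v' i))
    have hga := norm_nonneg (a - v' i)
    have hgb := norm_nonneg (b - v' i)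
    rw [hnm]
    nlinarith [sq_nonneg (‖a - v' i‖ - ‖b - v' i‖)]
  have hzB : ∀ i, ‖z - v' i‖ ≤ ρ := (hmem z).mp hz
  set A : Finset (Fin n) := Finset.univ.filter (fun i => ‖z - v' i‖ = ρ) with hA
  have hAmem : ∀ i, i ∈ A ↔ ‖z - v' i‖ = ρ := by
    intro i; simp [hA]
  -- generators point strictly away from the Slater direction
  have hgm : ∀ i ∈ A, ⟪z - v' i, m - z⟫ < 0 := by
    intro i hi
    have hnorm : ‖z - v' i‖ = ρ := (hAmem i).mp hi
    have hmz : m - z = (m - v' i) - (z - v' i) := by abel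
    rw [hmz, inner_sub_right]
    have h1 : ⟪z - v' i, m - v' i⟫ ≤ ‖z - v' i‖ * ‖m - v' i‖ := real_inner_le_norm _ _
    have h2 : ⟪z - v' i, z - v' i⟫ = ‖z - v' i‖ ^ 2 := real_inner_self_eq_norm_sq _
    nlinarith [hm i]
  set T : Finset (EuclideanSpace ℝ (Fin d)) := A.image (fun i => z - v' i) with hT
  set C : Set (EuclideanSpace ℝ (Fin d)) := convexHull ℝ (↑T : Set (EuclideanSpace ℝ (Fin d))) with hC
  have hCcomp : IsCompact C := T.finite_toSet.isCompact_convexHull ℝ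
  have hCconv : Convex ℝ C := convex_convexHull ℝ _
  have hCneg : ∀ x ∈ C, ⟪x, m - z⟫ < 0 := by
    have hlin : IsLinearMap ℝ (fun x : EuclideanSpace ℝ (Fin d) => ⟪x, m - z⟫) :=
      ⟨fun x y => inner_add_left _ _ _, fun c x => real_inner_smul_left _ _ _⟩
    intro x hx
    refine convexHull_min ?_ (convex_halfSpace_lt hlin 0) hx
    intro y hy
    obtain ⟨i, hi, rfl⟩ := Finset.mem_image.mp hy
    exact hgm i hi
  have h0C : (0:EuclideanSpace ℝ (Fin d)) ∉ C := by
    intro h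
    have h' := hCneg 0 h
    rw [inner_zero_left] at h'
    exact lt_irrefl _ h'
  set Kset : Set (EuclideanSpace ℝ (Fin d)) := insert 0 {x : EuclideanSpace ℝ (Fin d) | ∃ r : ℝ, 0 ≤ r ∧ ∃ c ∈ C, x = r • c} with hKset
  have hKclosed : IsClosed Kset := by
    rw [hKset, Set.insert_eq]
    exact (isClosed_singleton).union (aux_cone_closed hCcomp h0C)
  have hKsmul : ∀ (c : ℝ), 0 < c → ∀ x ∈ Kset, c • x ∈ Kset := by
    intro c hc x hx
    rcases hx with rfl | ⟨r, hr0, c', hc', rfl⟩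
    · left; simp
    · right; exact ⟨c * r, by positivity, c', hc', smul_smul _ _ _⟩
  have hKadd : ∀ x ∈ Kset, ∀ y ∈ Kset, x + y ∈ Kset := by
    intro x hx y hy
    rcases hx with rfl | ⟨r₁, hr₁, c₁, hc₁, rfl⟩
    · simpa using hy
    rcases hy with rfl | ⟨r₂, hr₂, c₂, hc₂, rfl⟩
    · right; exact ⟨r₁, hr₁, c₁, hc₁, by simp⟩
    by_cases hsum : r₁ + r₂ = 0
    · have e1 : r₁ = 0 := by linarith
      have e2 : r₂ = 0 := by linarith
      left; simp [e1, e2]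
    have hpos : 0 < r₁ + r₂ := lt_of_le_of_ne (by linarith) (Ne.symm hsum)
    right
    refine ⟨r₁ + r₂, hpos.le, (r₁/(r₁+r₂)) • c₁ + (r₂/(r₁+r₂)) • c₂,
      hCconv hc₁ hc₂ (by positivity) (by positivity) (by field_simp), ?_⟩
    rw [smul_add, smul_smul, smul_smul]
    have e1 : (r₁ + r₂) * (r₁ / (r₁ + r₂)) = r₁ := by field_simp
    have e2 : (r₁ + r₂) * (r₂ / (r₁ + r₂)) = r₂ := by field_simp
    rw [e1, e2]
  set K : ConvexCone ℝ (EuclideanSpace ℝ (Fin d)) :=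
    { carrier := Kset
      smul_mem' := fun c hc x hx => hKsmul c hc x hx
      add_mem' := fun x hx y hy => hKadd x hx y hy } with hKdef
  -- the key claim : v - z lies in the cone
  have key : v - z ∈ Kset := by
    by_contra hvzK
    obtain ⟨w, hw1, hw2⟩ :=
      ProperCone.hyperplane_separation'
        (⟨K.toPointedCone (Set.mem_insert _ _), hKclosed⟩ : ProperCone ℝ (EuclideanSpace ℝ (Fin d))) hvzK
    -- construct improving direction u
    have hc₀ : ⟪v - z, w⟫ < 0 := by
      exact hw2
    set q : ℝ := ⟪v - z, m - z⟫ with hq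
    set ε : ℝ := (-⟪v - z, w⟫) / (2 * (|q| + 1)) with hε
    have hεpos : 0 < ε := by
      apply div_pos (by linarith) (by positivity)
    set u : EuclideanSpace ℝ (Fin d) := -w + ε • (m - z) with hu
    have hinner_u : ∀ x : EuclideanSpace ℝ (Fin d), ⟪x, u⟫ = -⟪x, w⟫ + ε * ⟪x, m - z⟫ := by
      intro x
      rw [hu, inner_add_right, inner_neg_right, real_inner_smul_right]
    have h2 : 0 < ⟪v - z, u⟫ := by
      rw [hinner_u]
      have h3 : ε * (|q| + 1) = (-⟪v - z, w⟫) / 2 := by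
        rw [hε]; field_simp
      have h4 : -|q| ≤ q := neg_abs_le q
      have h5 : 0 ≤ |q| := abs_nonneg q
      nlinarith
    have h1 : ∀ i ∈ A, ⟪z - v' i, u⟫ < 0 := by
      intro i hi
      rw [hinner_u]
      have hmemK : z - v' i ∈ Kset := by
        right
        exact ⟨1, zero_le_one, z - v' i,
          subset_convexHull ℝ _ (Finset.mem_coe.mpr (Finset.mem_image_of_mem _ hi)),
          (one_smul _ _).symm⟩
      have hw : 0 ≤ ⟪z - v' i, w⟫ := hw1 _ hmemK
      have hneg := hgm i hi
      nlinarith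
    -- eventual feasibility and decrease
    have hfeas : ∀ i, ∀ᶠ t in nhdsWithin (0:ℝ) (Set.Ioi 0), ‖(z + t • u) - v' i‖ ≤ ρ := by
      intro i
      by_cases hiA : i ∈ A
      · have hneg : ∀ᶠ t in nhdsWithin (0:ℝ) (Set.Ioi 0),
            2 * ⟪z - v' i, u⟫ + t * ‖u‖^2 < 0 := by
          have hcont : Filter.Tendsto (fun t : ℝ => 2 * ⟪z - v' i, u⟫ + t * ‖u‖^2)
              (nhdsWithin (0:ℝ) (Set.Ioi 0)) (nhds (2 * ⟪z - v' i, u⟫)) := by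
            have hc : Continuous (fun t : ℝ => 2 * ⟪z - v' i, u⟫ + t * ‖u‖^2) :=
              continuous_const.add (continuous_id.mul continuous_const)
            have ht := hc.tendsto 0
            simp only [zero_mul, add_zero] at ht
            exact ht.mono_left nhdsWithin_le_nhds
          exact hcont.eventually_lt_const (by linarith [h1 i hiA])
        have hpos : ∀ᶠ t in nhdsWithin (0:ℝ) (Set.Ioi 0), (0:ℝ) < t :=
          eventually_mem_nhdsWithin
        filter_upwards [hneg, hpos] with t htneg htpos
        have hvec : (z + t • u) - v' i = (z - v' i) + t • u := add_sub_right_comm _ _ _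
        have hexp : ‖(z + t • u) - v' i‖^2
            = ρ^2 + t * (2 * ⟪z - v' i, u⟫ + t * ‖u‖^2) := by
          rw [hvec, norm_add_sq_real, real_inner_smul_right, norm_smul,
            (hAmem i).mp hiA]
          simp only [mul_pow, sq_abs, Real.norm_eq_abs]
          ring
        have hbn : 0 ≤ ‖(z + t • u) - v' i‖ := norm_nonneg _
        nlinarith [mul_nonpos_of_nonneg_of_nonpos htpos.le htneg.le]
      · have hlt : ‖z - v' i‖ < ρ := lt_of_le_of_ne (hzB i) (by simpa [hAmem] using hiA)
        have hcont : Filter.Tendsto (fun t : ℝ => ‖(z + t • u) - v' i‖)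
            (nhdsWithin (0:ℝ) (Set.Ioi 0)) (nhds ‖z - v' i‖) := by
          have hc : Continuous (fun t : ℝ => ‖(z + t • u) - v' i‖) :=
            ((continuous_const.add (continuous_id.smul continuous_const)).sub
              continuous_const).norm
          have ht := hc.tendsto 0
          simp only [zero_smul, add_zero] at ht
          exact ht.mono_left nhdsWithin_le_nhds
        exact (hcont.eventually_lt_const hlt).mono (fun t ht => ht.le)
    have hdec : ∀ᶠ t in nhdsWithin (0:ℝ) (Set.Ioi 0),
        ‖v - (z + t • u)‖ < ‖v - z‖ := by
      have hneg : ∀ᶠ t in nhdsWithin (0:ℝ) (Set.Ioi 0),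
          -2 * ⟪v - z, u⟫ + t * ‖u‖^2 < 0 := by
        have hcont : Filter.Tendsto (fun t : ℝ => -2 * ⟪v - z, u⟫ + t * ‖u‖^2)
            (nhdsWithin (0:ℝ) (Set.Ioi 0)) (nhds (-2 * ⟪v - z, u⟫)) := by
          have hc : Continuous (fun t : ℝ => -2 * ⟪v - z, u⟫ + t * ‖u‖^2) :=
            continuous_const.add (continuous_id.mul continuous_const)
          have ht := hc.tendsto 0
          simp only [zero_mul, add_zero] at ht
          exact ht.mono_left nhdsWithin_le_nhds
        exact hcont.eventually_lt_const (by linarith)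
      have hpos : ∀ᶠ t in nhdsWithin (0:ℝ) (Set.Ioi 0), (0:ℝ) < t :=
        eventually_mem_nhdsWithin
      filter_upwards [hneg, hpos] with t htneg htpos
      have hvec : v - (z + t • u) = (v - z) - t • u := by abel
      have hexp : ‖v - (z + t • u)‖^2
          = ‖v - z‖^2 + t * (-2 * ⟪v - z, u⟫ + t * ‖u‖^2) := by
        rw [hvec, norm_sub_sq_real, real_inner_smul_right, norm_smul]
        simp only [mul_pow, sq_abs, Real.norm_eq_abs]
        ring
      have hbn : 0 ≤ ‖v - (z + t • u)‖ := norm_nonneg _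
      have hvn : 0 ≤ ‖v - z‖ := norm_nonneg _
      nlinarith [mul_neg_of_pos_of_neg htpos htneg]
    have hall : ∀ᶠ t in nhdsWithin (0:ℝ) (Set.Ioi 0),
        (∀ i, ‖(z + t • u) - v' i‖ ≤ ρ) ∧ ‖v - (z + t • u)‖ < ‖v - z‖ :=
      (Filter.eventually_all.mpr hfeas).and hdec
    obtain ⟨t, ht⟩ := hall.exists
    exact absurd (hproj _ ((hmem _).mpr ht.1)) (not_le.mpr ht.2)
  -- extract the convex combination
  by_cases hveq : v = z
  · refine ⟨1, fun _ => 0, one_pos, fun _ => le_rfl, by simp, by simp [hveq]⟩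
  rcases key with h0 | ⟨r, hr0, c, hcC, hvzrc⟩
  · exact absurd (sub_eq_zero.mp h0) hveq
  have hrpos : 0 < r := by
    rcases hr0.lt_or_eq with h | h
    · exact h
    · exfalso; apply hveq; rw [← sub_eq_zero, hvzrc, ← h, zero_smul]
  -- c is a convex combination of the active generators
  rw [hC, Finset.convexHull_eq] at hcC
  obtain ⟨w, hw0, hw1, hwc⟩ := hcC
  have hcsum : c = ∑ y ∈ T, w y • y := by
    rw [← hwc, Finset.centerMass_eq_of_sum_1 _ id hw1]; rfl
  have hTne : T.Nonempty := by
    rcases Finset.eq_empty_or_nonempty T with h | h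
    · exfalso
      rw [h] at hw1
      simp at hw1
    · exact h
  obtain ⟨i₀, hi₀⟩ : A.Nonempty := Finset.Nonempty.of_image hTne
  set idx : EuclideanSpace ℝ (Fin d) → Fin n := fun y => if h : ∃ i ∈ A, z - v' i = y then h.choose else i₀
    with hidxdef
  have hidx : ∀ y ∈ T, z - v' (idx y) = y := by
    intro y hy
    obtain ⟨i, hi, hgi⟩ := Finset.mem_image.mp hy
    have h : ∃ i ∈ A, z - v' i = y := ⟨i, hi, hgi⟩
    rw [hidxdef]
    simp only [dif_pos h]
    exact h.choose_spec.2
  set lam : Fin n → ℝ := fun i => r * ∑ y ∈ T.filter (fun y => idx y = i), w y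
    with hlam
  have hlam0 : ∀ i, 0 ≤ lam i := by
    intro i
    exact mul_nonneg hr0 (Finset.sum_nonneg fun y hy =>
      hw0 y (Finset.filter_subset _ _ hy))
  have hfiber : ∀ (f : EuclideanSpace ℝ (Fin d) → ℝ),
      ∑ i : Fin n, ∑ y ∈ T.filter (fun y => idx y = i), f y = ∑ y ∈ T, f y :=
    fun f => Finset.sum_fiberwise_of_maps_to (fun y _ => Finset.mem_univ (idx y)) f
  have hlamsum : ∑ i, lam i = r := by
    rw [hlam]
    simp only
    rw [← Finset.mul_sum, hfiber, hw1, mul_one]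
  have hlamg : ∑ i, lam i • (z - v' i) = v - z := by
    have step1 : ∀ i : Fin n, lam i • (z - v' i)
        = ∑ y ∈ T.filter (fun y => idx y = i), (r * w y) • (z - v' i) := by
      intro i
      rw [hlam]
      simp only
      rw [Finset.mul_sum, Finset.sum_smul]
    have step2 : ∀ i : Fin n, ∑ y ∈ T.filter (fun y => idx y = i), (r * w y) • (z - v' i)
        = ∑ y ∈ T.filter (fun y => idx y = i), (r * w y) • y := by
      intro i
      refine Finset.sum_congr rfl fun y hy => ?_
      rw [Finset.mem_filter] at hy
      rw [← hy.2, hidx y hy.1]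
    calc ∑ i, lam i • (z - v' i)
        = ∑ i : Fin n, ∑ y ∈ T.filter (fun y => idx y = i), (r * w y) • y := by
          refine Finset.sum_congr rfl fun i _ => ?_
          rw [step1 i, step2 i]
      _ = ∑ y ∈ T, (r * w y) • y :=
          Finset.sum_fiberwise_of_maps_to (fun y _ => Finset.mem_univ (idx y)) _
      _ = r • ∑ y ∈ T, w y • y := by
          rw [Finset.smul_sum]
          exact Finset.sum_congr rfl fun y _ => (mul_smul r (w y) y)
      _ = v - z := by rw [← hcsum, ← hvzrc]
  -- assemble
  set s : ℝ := ∑ i, lam i with hs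
  have hs0 : 0 ≤ s := Finset.sum_nonneg fun i _ => hlam0 i
  have h1s : (0:ℝ) < 1 + s := by linarith
  refine ⟨(1+s)⁻¹, fun i => lam i * (1+s)⁻¹, by positivity,
    fun i => mul_nonneg (hlam0 i) (by positivity), ?_, ?_⟩
  · rw [← Finset.sum_mul]
    rw [← hs]
    field_simp
  · have hexp : ∑ i, lam i • (z - v' i) = s • z - ∑ i, lam i • v' i := by
      simp only [smul_sub]
      rw [Finset.sum_sub_distrib, ← Finset.sum_smul, ← hs]
    rw [hexp] at hlamg
    have hkey2 : v + ∑ i, lam i • v' i = (1+s) • z := by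
      have h2 : v = s • z - ∑ i, lam i • v' i + z := sub_eq_iff_eq_add.mp hlamg.symm
      rw [h2, add_smul, one_smul]
      abel
    have hz2 : z = (1+s)⁻¹ • (v + ∑ i, lam i • v' i) := by
      rw [hkey2, smul_smul, inv_mul_cancel₀ h1s.ne', one_smul]
    rw [hz2, smul_add]
    congr 1
    rw [Finset.smul_sum]
    exact Finset.sum_congr rfl fun i _ => by rw [smul_smul, mul_comm]
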